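/- Let R be a commutative domain and let f₁,…,f_m, g₁,…,g_{m'} be a sequence of elements of R that is a regular sequence in every order. If P ∈ R[x₁,…,x_m] is a homogeneous polynomial of degree k such that P(f₁,…,f_m) lies in the ideal generated by g₁,…,g_{m'}, then there exists a homogeneous polynomial Q ∈ R[x₁,…,x_m] of degree k, all of whose coefficients lie in the ideal generated by g₁,…,g_{m'}, with P(f₁,…,f_m) = Q(f₁,…,f_m). -/

import Mathlib

open Ideal RingTheory.Sequence


theorem powLe {R : Type*} [CommRing R] (F I' : Ideal R) :
    ∀ k : ℕ, (F ⊔ I') ^ (k + 1) ≤ I' ^ (k + 1) ⊔ F * (F ⊔ I') ^ k := by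
  intro k
  induction k with
  | zero => simp [pow_one, Ideal.mul_top, sup_comm]
  | succ k ih =>
    calc (F ⊔ I') ^ (k + 2) = (F ⊔ I') ^ (k + 1) * (F ⊔ I') := by rw [pow_succ]
    _ ≤ (I' ^ (k + 1) ⊔ F * (F ⊔ I') ^ k) * (F ⊔ I') := Ideal.mul_mono_left ih
    _ = I' ^ (k+1) * F ⊔ I' ^ (k+1) * I' ⊔ (F * (F ⊔ I') ^ k) * (F ⊔ I') := by
        rw [Ideal.sup_mul, Ideal.mul_sup]
    _ ≤ I' ^ (k + 2) ⊔ F * (F ⊔ I') ^ (k + 1) := by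
        apply sup_le (sup_le ?_ ?_) ?_
        · apply le_sup_of_le_right
          rw [mul_comm]
          exact Ideal.mul_mono_right (Ideal.pow_right_mono le_sup_right _)
        · apply le_sup_of_le_left
          rw [← pow_succ]
        · apply le_sup_of_le_right
          rw [mul_assoc, ← pow_succ]

theorem nzd_of_reg {R : Type*} [CommRing R] (gs : List R) (a : R) (rest : List R)
    (h : RingTheory.Sequence.IsRegular R (gs ++ (a :: rest))) (w : R)
    (hw : a * w ∈ Ideal.ofList gs) : w ∈ Ideal.ofList gs := by
  have h1 := h.toIsWeaklyRegular
  rw [isWeaklyRegular_append_iff] at h1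
  have h2 := h1.2
  rw [isWeaklyRegular_cons_iff] at h2
  have h3 := h2.1
  have hJ : (Ideal.ofList gs • ⊤ : Submodule R R) = Ideal.ofList gs := by
    rw [smul_eq_mul, mul_top]
  have key : a • (Submodule.Quotient.mk w : R ⧸ (Ideal.ofList gs • ⊤ : Submodule R R)) = a • (0 : R ⧸ (Ideal.ofList gs • ⊤ : Submodule R R)) := by
    rw [smul_zero, ← Submodule.Quotient.mk_smul, Submodule.Quotient.mk_eq_zero, hJ]
    simpa [smul_eq_mul] using hw
  have := h3 key
  rwa [Submodule.Quotient.mk_eq_zero, hJ] at this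
theorem keyC {R : Type*} [CommRing R] :
    ∀ (N k : ℕ) (fs gs : List R), k + fs.length ≤ N →
    (∀ l : List R, l.Perm (fs ++ gs) → RingTheory.Sequence.IsRegular R l) →
    ∀ x, x ∈ Ideal.ofList gs → x ∈ Ideal.ofList fs ^ k →
      x ∈ Ideal.ofList gs * Ideal.ofList fs ^ k := by
  intro N
  induction N with
  | zero =>
    intro k fs gs hN hreg x hxJ hxI
    obtain rfl : k = 0 := by omega
    simpa [Ideal.one_eq_top, Ideal.mul_top] using hxJ
  | succ N ih =>
    intro k fs gs hN hreg x hxJ hxI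
    match k, fs with
    | 0, fs => simpa [Ideal.one_eq_top, Ideal.mul_top] using hxJ
    | k+1, [] =>
      rw [Ideal.ofList_nil, ← Ideal.zero_eq_bot, zero_pow (Nat.succ_ne_zero k),
        Ideal.zero_eq_bot, Ideal.mem_bot] at hxI
      subst hxI; exact zero_mem _
    | k+1, fm :: fs' =>
      rw [Ideal.ofList_cons] at hxI ⊢
      set J := Ideal.ofList gs with hJdef
      set F := Ideal.span {fm} with hFdef
      set I' := Ideal.ofList fs' with hI'def
      -- decompose x = y + fm * z
      have h1 := powLe F I' k hxI
      rw [Submodule.mem_sup] at h1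
      obtain ⟨y, hy, w, hw, hyw⟩ := h1
      rw [Ideal.mem_span_singleton_mul] at hw
      obtain ⟨z, hz, rfl⟩ := hw
      -- apply IH₁ to y
      have perm₁ : (fs' ++ (gs ++ [fm])).Perm ((fm :: fs') ++ gs) :=
        (List.Perm.append_left fs' List.perm_append_comm).trans List.perm_middle
      have hyJ : y ∈ Ideal.ofList (gs ++ [fm]) := by
        rw [Ideal.ofList_append, Ideal.ofList_singleton]
        have : y = x - fm * z := by rw [← hyw]; ring
        rw [this]
        exact sub_mem (Ideal.mem_sup_left hxJ)
          (Ideal.mem_sup_right (Ideal.mul_mem_right z _ (Ideal.mem_span_singleton_self fm)))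
      have hy2 := ih (k+1) fs' (gs ++ [fm]) (by simp at hN ⊢; omega)
        (fun l hl => hreg l (hl.trans perm₁)) y hyJ hy
      rw [Ideal.ofList_append, Ideal.ofList_singleton, Ideal.sup_mul, Submodule.mem_sup] at hy2
      obtain ⟨u, hu, w₂, hw₂, huw⟩ := hy2
      rw [Ideal.mem_span_singleton_mul] at hw₂
      obtain ⟨v, hv, rfl⟩ := hw₂
      -- x = u + fm * (v + z)
      have hx : x = u + fm * (v + z) := by rw [← hyw, ← huw]; ring
      -- v + z ∈ J
      have hvzJ : v + z ∈ J := by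
        apply nzd_of_reg gs fm fs' (hreg _ List.perm_append_comm)
        have : fm * (v + z) = x - u := by rw [hx]; ring
        rw [this]
        exact sub_mem hxJ (Ideal.mul_le_left hu)
      -- v + z ∈ (F ⊔ I')^k
      have hvzI : v + z ∈ (F ⊔ I') ^ k := by
        apply add_mem _ hz
        exact Ideal.pow_le_pow_right (Nat.le_succ k) (Ideal.pow_right_mono le_sup_right _ hv)
      -- IH₂
      have hvz := ih k (fm :: fs') gs (by simp at hN ⊢; omega) hreg (v + z) hvzJ
        (by rwa [Ideal.ofList_cons])
      rw [Ideal.ofList_cons] at hvz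
      -- conclude
      rw [hx]
      apply add_mem
      · exact Ideal.mul_mono_right (Ideal.pow_right_mono le_sup_right _) hu
      · have h2 : fm * (v + z) ∈ F * (J * (F ⊔ I') ^ k) :=
          Ideal.mul_mem_mul (Ideal.mem_span_singleton_self fm) hvz
        have h3 : F * (J * (F ⊔ I') ^ k) ≤ J * (F ⊔ I') ^ (k+1) := by
          rw [show F * (J * (F ⊔ I') ^ k) = J * (F * (F ⊔ I') ^ k) by ring]
          apply Ideal.mul_mono_right
          rw [pow_succ']
          exact Ideal.mul_mono_left le_sup_left
        exact h3 h2

theorem prod_pow_mem {R : Type*} [CommRing R] {n : ℕ} (f : Fin n → R) (d : Fin n →₀ ℕ)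
    (s : Finset (Fin n)) :
    (∏ i ∈ s, f i ^ d i) ∈ Ideal.span (Set.range f) ^ (∑ i ∈ s, d i) := by
  classical
  induction s using Finset.induction with
  | empty => simp [Ideal.one_eq_top]
  | @insert a s ha ih =>
    rw [Finset.prod_insert ha, Finset.sum_insert ha, pow_add]
    exact Ideal.mul_mem_mul (Ideal.pow_mem_pow (Ideal.subset_span (Set.mem_range_self a)) _) ih

theorem eval_mem_pow {R : Type*} [CommRing R] {n k : ℕ} (f : Fin n → R)
    (P : MvPolynomial (Fin n) R) (hP : P.IsHomogeneous k) :
    MvPolynomial.eval f P ∈ Ideal.span (Set.range f) ^ k := by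
  rw [MvPolynomial.eval_eq]
  apply Submodule.sum_mem
  intro d hd
  have hdeg : (∑ i ∈ d.support, d i) = k := by
    have := hP (MvPolynomial.mem_support_iff.mp hd)
    simpa [Finsupp.weight_apply, Finsupp.sum] using this
  rw [← hdeg]
  exact Ideal.mul_mem_left _ _ (prod_pow_mem f d d.support)

theorem exists_homog {R : Type*} [CommRing R] {n : ℕ} (f : Fin n → R) :
    ∀ (k : ℕ) (b : R), b ∈ Ideal.span (Set.range f) ^ k →
    ∃ B : MvPolynomial (Fin n) R, B.IsHomogeneous k ∧ MvPolynomial.eval f B = b := by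
  intro k
  induction k with
  | zero =>
    intro b _
    exact ⟨MvPolynomial.C b, MvPolynomial.isHomogeneous_C _ _, by simp⟩
  | succ k ih =>
    intro b hb
    rw [pow_succ] at hb
    refine Submodule.mul_induction_on hb ?_ ?_
    · intro a ha c hc
      obtain ⟨A, hA, rfl⟩ := ih a ha
      have hlin : ∃ B : MvPolynomial (Fin n) R, B.IsHomogeneous 1 ∧ MvPolynomial.eval f B = c := by
        refine Submodule.span_induction ?_ ?_ ?_ ?_ hc
        · rintro x ⟨i, rfl⟩
          exact ⟨MvPolynomial.X i, MvPolynomial.isHomogeneous_X _ _, by simp⟩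
        · exact ⟨0, MvPolynomial.isHomogeneous_zero _ _ _, by simp⟩
        · rintro x y - - ⟨B₁, h₁, e₁⟩ ⟨B₂, h₂, e₂⟩
          exact ⟨B₁ + B₂, h₁.add h₂, by simp [e₁, e₂]⟩
        · rintro r x - ⟨B₁, h₁, e₁⟩
          refine ⟨MvPolynomial.C r * B₁, ?_, by simp [e₁]⟩
          simpa using (MvPolynomial.isHomogeneous_C _ r).mul h₁
      obtain ⟨B, hB, rfl⟩ := hlin
      exact ⟨A * B, hA.mul hB, by simp⟩
    · rintro x y ⟨B₁, h₁, e₁⟩ ⟨B₂, h₂, e₂⟩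
      exact ⟨B₁ + B₂, h₁.add h₂, by simp [e₁, e₂]⟩

theorem ofList_ofFn {R : Type*} [CommRing R] {n : ℕ} (f : Fin n → R) :
    Ideal.ofList (List.ofFn f) = Ideal.span (Set.range f) := by
  apply congrArg Ideal.span
  ext r
  simp [List.mem_ofFn]

theorem final_glue {R : Type*} [CommRing R] {m k : ℕ} (f : Fin m → R) (J : Ideal R)
    (x : R) (hx : x ∈ J * Ideal.span (Set.range f) ^ k)
    (exh : ∀ (b : R), b ∈ Ideal.span (Set.range f) ^ k →
      ∃ B : MvPolynomial (Fin m) R, B.IsHomogeneous k ∧ MvPolynomial.eval f B = b) :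
    ∃ Q : MvPolynomial (Fin m) R, Q.IsHomogeneous k ∧
      (∀ e, MvPolynomial.coeff e Q ∈ J) ∧ MvPolynomial.eval f Q = x := by
  refine Submodule.mul_induction_on hx ?_ ?_
  · intro a ha c hc
    obtain ⟨B, hB, rfl⟩ := exh c hc
    refine ⟨MvPolynomial.C a * B, by simpa using (MvPolynomial.isHomogeneous_C _ a).mul hB,
      fun e => ?_, by simp⟩
    rw [MvPolynomial.coeff_C_mul]
    exact Ideal.mul_mem_right _ _ ha
  · rintro x y ⟨Q₁, h₁, c₁, e₁⟩ ⟨Q₂, h₂, c₂, e₂⟩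
    exact ⟨Q₁ + Q₂, h₁.add h₂, fun e => by
      rw [MvPolynomial.coeff_add]; exact add_mem (c₁ e) (c₂ e), by simp [e₁, e₂]⟩

/-- Let `R` be a commutative domain and `f₁,…,f_m, g₁,…,g_{m'}` a
sequence of elements of `R` that is a regular sequence in every order.  If
`P ∈ R[x₁,…,x_m]` is homogeneous of degree `k` and `P(f₁,…,f_m)` lies in the ideal
generated by the `gⱼ`, then there is a homogeneous polynomial `Q` of degree `k` all of
whose coefficients lie in `(g₁,…,g_{m'})` with `P(f) = Q(f)`. -/
theorem stmt_0 {R : Type*} [CommRing R] [IsDomain R] {m m' k : ℕ}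
    (f : Fin m → R) (g : Fin m' → R)
    (hreg : ∀ l : List R, l.Perm (List.ofFn f ++ List.ofFn g) →
      RingTheory.Sequence.IsRegular R l)
    (P : MvPolynomial (Fin m) R) (hP : P.IsHomogeneous k)
    (hPf : MvPolynomial.eval f P ∈ Ideal.span (Set.range g)) :
    ∃ Q : MvPolynomial (Fin m) R, Q.IsHomogeneous k ∧
      (∀ e, MvPolynomial.coeff e Q ∈ Ideal.span (Set.range g)) ∧
      MvPolynomial.eval f P = MvPolynomial.eval f Q := by
  have hI := ofList_ofFn f
  have hJ := ofList_ofFn g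
  have hx : MvPolynomial.eval f P ∈
      Ideal.span (Set.range g) * Ideal.span (Set.range f) ^ k := by
    have h2 := keyC (k + m) k (List.ofFn f) (List.ofFn g) (by simp)
      hreg (MvPolynomial.eval f P) (by rwa [hJ])
      (by rw [hI]; exact eval_mem_pow f P hP)
    rwa [hI, hJ] at h2
  obtain ⟨Q, h1, h2, h3⟩ := final_glue f _ _ hx (fun b hb => exists_homog f k b hb)
  exact ⟨Q, h1, h2, h3.symm⟩
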